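/- Let E be a real inner product space, C ⊆ E convex compact with 0 ∈ C, f : C → C 1-Lipschitz, and for λ ∈ (0,1) let y_λ satisfy λ f(y_λ) = y_λ. Then for every fixed point y of f and every λ ∈ (0,1), ⟨y_λ, y_λ − y⟩ ≤ 0. -/

import Mathlib

open Set

theorem inner_ylam_sub_fixed_nonpos
    {E : Type*} [NormedAddCommGroup E] [InnerProductSpace ℝ E]
    (C : Set E) (hC : Convex ℝ C) (hCcpt : IsCompact C) (h0 : (0:E) ∈ C)
    (f : E → E) (hf : MapsTo f C C) (hlip : LipschitzOnWith 1 f C)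
    (l : ℝ) (hl : l ∈ Ioo (0:ℝ) 1)
    (ylam : E) (hylam : ylam ∈ C) (hfix : l • f ylam = ylam)
    (y : E) (hy : y ∈ C) (hfy : f y = y) :
    (inner ℝ ylam (ylam - y) : ℝ) ≤ 0 := by
  obtain ⟨hl0, hl1⟩ := hl
  have hfylam : f ylam = l⁻¹ • ylam := by
    conv_rhs => rw [← hfix]
    rw [smul_smul, inv_mul_cancel₀ hl0.ne', one_smul]
  have hd := hlip hylam hy
  rw [edist_dist, edist_dist, ENNReal.coe_one, one_mul,
    ENNReal.ofReal_le_ofReal_iff dist_nonneg] at hd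
  rw [hfylam, hfy, dist_eq_norm, dist_eq_norm] at hd
  have hsq : ‖l⁻¹ • ylam - y‖ ^ 2 ≤ ‖ylam - y‖ ^ 2 := by
    have := norm_nonneg (l⁻¹ • ylam - y)
    nlinarith [norm_nonneg (ylam - y)]
  have e1 : ‖l⁻¹ • ylam - y‖ ^ 2
      = l⁻¹ ^ 2 * ‖ylam‖ ^ 2 - 2 * l⁻¹ * (inner ℝ ylam y : ℝ) + ‖y‖ ^ 2 := by
    rw [← real_inner_self_eq_norm_sq (l⁻¹ • ylam - y)]
    rw [inner_sub_sub_self]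
    simp [real_inner_smul_left, real_inner_smul_right,
      real_inner_self_eq_norm_sq, norm_smul, real_inner_comm y ylam]
    rw [abs_of_pos hl0]
    ring
  have e2 : ‖ylam - y‖ ^ 2
      = ‖ylam‖ ^ 2 - 2 * (inner ℝ ylam y : ℝ) + ‖y‖ ^ 2 := by
    rw [← real_inner_self_eq_norm_sq (ylam - y), inner_sub_sub_self]
    simp [real_inner_self_eq_norm_sq, real_inner_comm y ylam]
    ring
  rw [e1, e2] at hsq
  have hinn : (inner ℝ ylam (ylam - y) : ℝ)
      = ‖ylam‖ ^ 2 - (inner ℝ ylam y : ℝ) := by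
    rw [inner_sub_right, real_inner_self_eq_norm_sq]
  rw [hinn]
  have hlinv : (1:ℝ) < l⁻¹ := (one_lt_inv₀ hl0).mpr hl1
  nlinarith [sq_nonneg ‖ylam‖, sq_nonneg (l⁻¹ - 1), mul_pos hl0 hl0]
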